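/- Let φ : ℝⁿ → ℝⁿ be the Morin map φ(x₁,…,x_{n-1}, y) = (x₁,…,x_{n-1}, y^{n+1} + Σ_{i=1}^{n-1} x_i y^i). Then the Euler-type vector field η with components η_i(X) = (n+1-i)·X_i for 1 ≤ i ≤ n-1 and η_n(X) = (n+1)·X_n is liftable over φ, with lift ξ(x,y) = ((n+1-1)x₁, …, (n+1-(n-1))x_{n-1}, y). -/

import Mathlib

/-- For the Morin map φ(x,y) = (x, y^{n+1} + Σ x_i y^i), the Euler-type
vector field η with η_i(X) = (n+1-i)·X_i (1 ≤ i ≤ n-1) and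
η_n(X) = (n+1)·X_n is liftable over φ, with lift
ξ(x,y) = ((n+1-1)x₁,…,(n+1-(n-1))x_{n-1}, y). -/
theorem stmt10 (n : ℕ) (hn : 1 ≤ n) :
    ∀ p : (Fin (n - 1) → ℝ) × ℝ,
      fderiv ℝ
          (fun q : (Fin (n - 1) → ℝ) × ℝ =>
            ((q.1, q.2 ^ (n + 1) + ∑ i : Fin (n - 1), q.1 i * q.2 ^ (i.val + 1)) :
              (Fin (n - 1) → ℝ) × ℝ))
          p
          ((fun i => ((n + 1 - (i.val + 1) : ℕ) : ℝ) * p.1 i), p.2)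
        = ((fun i => ((n + 1 - (i.val + 1) : ℕ) : ℝ) * p.1 i),
            ((n + 1 : ℕ) : ℝ) *
              (p.2 ^ (n + 1) + ∑ i : Fin (n - 1), p.1 i * p.2 ^ (i.val + 1))) := by
  intro p
  have hsnd : HasFDerivAt (fun q : (Fin (n - 1) → ℝ) × ℝ => q.2)
      (ContinuousLinearMap.snd ℝ (Fin (n - 1) → ℝ) ℝ) p := hasFDerivAt_snd
  have hg : HasFDerivAt
      (fun q : (Fin (n - 1) → ℝ) × ℝ =>
        q.2 ^ (n + 1) + ∑ i : Fin (n - 1), q.1 i * q.2 ^ (i.val + 1))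
      ((((n+1 : ℕ) : ℝ) * p.2 ^ n) • ContinuousLinearMap.snd ℝ (Fin (n - 1) → ℝ) ℝ +
        ∑ i : Fin (n - 1),
          (p.1 i • ((((i.val+1 : ℕ) : ℝ) * p.2 ^ i.val) • ContinuousLinearMap.snd ℝ (Fin (n - 1) → ℝ) ℝ) +
           p.2 ^ (i.val + 1) • ((ContinuousLinearMap.proj i).comp (ContinuousLinearMap.fst ℝ (Fin (n - 1) → ℝ) ℝ)))) p := by
    apply HasFDerivAt.add
    · simpa [Function.comp_def] using (hasDerivAt_pow (n + 1) p.2).comp_hasFDerivAt p hsnd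
    · apply HasFDerivAt.fun_sum
      intro i _
      have hc : HasFDerivAt (fun q : (Fin (n - 1) → ℝ) × ℝ => q.1 i)
          ((ContinuousLinearMap.proj i).comp (ContinuousLinearMap.fst ℝ (Fin (n - 1) → ℝ) ℝ)) p :=
        ((ContinuousLinearMap.proj i).comp (ContinuousLinearMap.fst ℝ (Fin (n - 1) → ℝ) ℝ)).hasFDerivAt
      have hp : HasFDerivAt (fun q : (Fin (n - 1) → ℝ) × ℝ => q.2 ^ (i.val + 1))
          (((((i.val+1 : ℕ)) : ℝ) * p.2 ^ i.val) • ContinuousLinearMap.snd ℝ (Fin (n - 1) → ℝ) ℝ) p := by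
        simpa [Function.comp_def] using (hasDerivAt_pow (i.val + 1) p.2).comp_hasFDerivAt p hsnd
      simpa using hc.fun_mul hp
  have h := (HasFDerivAt.prodMk hasFDerivAt_fst hg).fderiv
  rw [h]
  refine Prod.ext ?_ ?_
  · simp
  · simp only [ContinuousLinearMap.prod_apply, ContinuousLinearMap.add_apply,
      ContinuousLinearMap.smul_apply, ContinuousLinearMap.sum_apply,
      ContinuousLinearMap.coe_comp', Function.comp_apply, ContinuousLinearMap.coe_fst',
      ContinuousLinearMap.coe_snd', ContinuousLinearMap.proj_apply, smul_eq_mul]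
    rw [mul_add, Finset.mul_sum]
    congr 1
    · ring
    · apply Finset.sum_congr rfl
      intro i _
      have hcast : ((n + 1 - (i.val + 1) : ℕ) : ℝ) = (n : ℝ) - i.val := by
        have h1 : n + 1 - (i.val + 1) = n - i.val := by omega
        rw [h1, Nat.cast_sub (le_of_lt (by omega : i.val < n))]
      rw [hcast]
      push_cast
      ring
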